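/- Two matrices N, N' in Borel normal form (0/1 matrices with square zero and at most one nonzero entry per row and column) are equal if and only if dim(N·V_j ∩ V_{≥i}) = dim(N'·V_j ∩ V_{≥i}) for all 1 ≤ i,j ≤ n. -/

import Mathlib

/-- Normal form: square zero, 0/1 entries, at most one nonzero entry
in each row and each column. -/
def NormalForm {n : ℕ} (N : Matrix (Fin n) (Fin n) ℂ) : Prop :=
  N ^ 2 = 0 ∧ (∀ i j, N i j = 0 ∨ N i j = 1) ∧
    (∀ i j j', N i j ≠ 0 → N i j' ≠ 0 → j = j') ∧
    (∀ i i' j, N i j ≠ 0 → N i' j ≠ 0 → i = i')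

/-- The span of the first standard basis vectors `e₁,…,e_j`. -/
noncomputable def Vle (n : ℕ) (j : Fin n) : Submodule ℂ (Fin n → ℂ) :=
  Submodule.span ℂ {v | ∃ b : Fin n, b ≤ j ∧ v = Pi.single b (1 : ℂ)}

/-- The span of the last standard basis vectors `e_i,…,e_n`. -/
noncomputable def Vge (n : ℕ) (i : Fin n) : Submodule ℂ (Fin n → ℂ) :=
  Submodule.span ℂ {v | ∃ a : Fin n, i ≤ a ∧ v = Pi.single a (1 : ℂ)}

section Aux

variable {n : ℕ}

/-- The coordinate subspace supported on `S`. -/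
noncomputable def coordSub (S : Set (Fin n)) : Submodule ℂ (Fin n → ℂ) where
  carrier := {x | ∀ a ∉ S, x a = 0}
  add_mem' := by intro x y hx hy a ha; simp [hx a ha, hy a ha]
  zero_mem' := by intro a _; rfl
  smul_mem' := by intro c x hx a ha; simp [hx a ha]

lemma mem_coordSub {S : Set (Fin n)} {x : Fin n → ℂ} :
    x ∈ coordSub S ↔ ∀ a ∉ S, x a = 0 := Iff.rfl

/-- The set of `Pi.single`s supported on `S`. -/
def singlesOf (S : Set (Fin n)) : Set (Fin n → ℂ) :=
  {v | ∃ a, a ∈ S ∧ v = Pi.single a (1 : ℂ)}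

lemma span_singles (S : Set (Fin n)) :
    Submodule.span ℂ (singlesOf S) = coordSub S := by
  classical
  apply le_antisymm
  · rw [Submodule.span_le]
    rintro v ⟨a, ha, rfl⟩ a' ha'
    exact Pi.single_eq_of_ne (by rintro rfl; exact ha' ha) 1
  · intro x hx
    rw [pi_eq_sum_univ x]
    apply Submodule.sum_mem
    intro a _
    by_cases haS : a ∈ S
    · apply Submodule.smul_mem
      apply Submodule.subset_span
      refine ⟨a, haS, ?_⟩
      ext j
      simp [Pi.single_apply, eq_comm]
    · rw [hx a haS, zero_smul]
      exact Submodule.zero_mem _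

lemma single_injective :
    Function.Injective (fun a : Fin n => Pi.single a (1 : ℂ)) := by
  intro a a' h
  by_contra hne
  have h2 := congrFun h a
  simp only at h2
  rw [Pi.single_eq_same, Pi.single_eq_of_ne hne] at h2
  exact one_ne_zero h2

lemma finrank_coordSub (S : Finset (Fin n)) :
    Module.finrank ℂ (coordSub (S : Set (Fin n)) : Submodule ℂ (Fin n → ℂ)) = S.card := by
  classical
  rw [← span_singles]
  have himg : singlesOf (S : Set (Fin n)) =
      ((S.image (fun a => Pi.single a (1 : ℂ))) : Set (Fin n → ℂ)) := by
    ext v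
    simp only [singlesOf, Set.mem_setOf_eq, Finset.coe_image, Set.mem_image,
      Finset.mem_coe]
    constructor
    · rintro ⟨a, ha, rfl⟩; exact ⟨a, ha, rfl⟩
    · rintro ⟨a, ha, rfl⟩; exact ⟨a, ha, rfl⟩
  rw [himg, finrank_span_finset_eq_card, Finset.card_image_of_injective _ single_injective]
  · -- linear independence
    refine LinearIndepOn.mono ((linearIndepOn_id_range_iff
      (Pi.basisFun ℂ (Fin n)).linearIndependent.injective).mpr
      (Pi.basisFun ℂ (Fin n)).linearIndependent) ?_
    intro v hv
    obtain ⟨a, -, rfl⟩ := Finset.mem_image.mp hv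
    exact ⟨a, by simp⟩

lemma coordSub_inf (S T : Set (Fin n)) :
    coordSub S ⊓ coordSub T = coordSub (S ∩ T) := by
  ext x
  simp only [Submodule.mem_inf, mem_coordSub]
  constructor
  · rintro ⟨h1, h2⟩ a ha
    by_cases hS : a ∈ S
    · exact h2 a (fun hT => ha ⟨hS, hT⟩)
    · exact h1 a hS
  · intro h
    exact ⟨fun a ha => h a (fun h' => ha h'.1), fun a ha => h a (fun h' => ha h'.2)⟩

lemma Vge_eq (i : Fin n) : Vge n i = coordSub {a : Fin n | i ≤ a} := by
  rw [← span_singles]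
  rfl

lemma map_Vle (N : Matrix (Fin n) (Fin n) ℂ) (hN : NormalForm N) (j : Fin n) :
    (Vle n j).map N.mulVecLin = coordSub {a : Fin n | ∃ b : Fin n, b ≤ j ∧ N a b ≠ 0} := by
  obtain ⟨-, h01, hrow, hcol⟩ := hN
  rw [Vle, Submodule.map_span]
  apply le_antisymm
  · rw [Submodule.span_le]
    rintro v ⟨w, ⟨b, hb, rfl⟩, rfl⟩ a ha
    show N.mulVec (Pi.single b 1) a = 0
    rw [Matrix.mulVec_single]
    have hz : N a b = 0 := by
      by_contra h
      exact ha ⟨b, hb, h⟩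
    simp [hz]
  · rw [← span_singles, Submodule.span_le]
    rintro v ⟨a, ⟨b, hb, hab⟩, rfl⟩
    apply Submodule.subset_span
    refine ⟨Pi.single b 1, ⟨b, hb, rfl⟩, ?_⟩
    show N.mulVec (Pi.single b 1) = Pi.single a (1 : ℂ)
    rw [Matrix.mulVec_single]
    ext a'
    by_cases h : a' = a
    · subst h
      have : N a' b = 1 := (h01 a' b).resolve_left hab
      simp [this]
    · have hz : N a' b = 0 := by
        by_contra h'
        exact h (hcol a' a b h' hab)
      simp [hz, Pi.single_eq_of_ne h]

open Classical in
/-- The counting function. -/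
noncomputable def cnt (N : Matrix (Fin n) (Fin n) ℂ) (i j : ℕ) : ℕ :=
  (Finset.univ.filter
    (fun a : Fin n => i ≤ a.val ∧ ∃ b : Fin n, b.val < j ∧ N a b ≠ 0)).card

lemma finrank_eq_cnt (N : Matrix (Fin n) (Fin n) ℂ) (hN : NormalForm N) (i j : Fin n) :
    Module.finrank ℂ ((Vle n j).map N.mulVecLin ⊓ Vge n i : Submodule ℂ (Fin n → ℂ)) =
      cnt N i.val (j.val + 1) := by
  classical
  rw [map_Vle N hN j, Vge_eq, coordSub_inf]
  have hset : ({a : Fin n | ∃ b : Fin n, b ≤ j ∧ N a b ≠ 0} ∩ {a : Fin n | i ≤ a})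
      = ((Finset.univ.filter
        (fun a : Fin n => i.val ≤ a.val ∧ ∃ b : Fin n, b.val < j.val + 1 ∧ N a b ≠ 0)
        : Finset (Fin n)) : Set (Fin n)) := by
    ext a
    simp only [Set.mem_inter_iff, Set.mem_setOf_eq, Finset.coe_filter, Finset.mem_univ,
      true_and, Nat.lt_succ_iff]
    constructor
    · rintro ⟨⟨b, hb, hab⟩, hia⟩
      exact ⟨hia, b, hb, hab⟩
    · rintro ⟨hia, b, hb, hab⟩
      exact ⟨⟨b, hb, hab⟩, hia⟩
  rw [hset, finrank_coordSub]
  rfl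

lemma cnt_zero (N : Matrix (Fin n) (Fin n) ℂ) (i : ℕ) : cnt N i 0 = 0 := by
  classical
  rw [cnt, Finset.card_eq_zero, Finset.filter_eq_empty_iff]
  rintro a - ⟨-, b, hb, -⟩
  omega

lemma cnt_top (N : Matrix (Fin n) (Fin n) ℂ) {i : ℕ} (hi : n ≤ i) (j : ℕ) :
    cnt N i j = 0 := by
  classical
  rw [cnt, Finset.card_eq_zero, Finset.filter_eq_empty_iff]
  rintro a - ⟨ha, -⟩
  have := a.isLt
  omega

lemma cnt_identity (N : Matrix (Fin n) (Fin n) ℂ)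
    (hrow : ∀ i j j', N i j ≠ 0 → N i j' ≠ 0 → j = j') (a b : Fin n) :
    cnt N a.val (b.val + 1) + cnt N (a.val + 1) b.val =
      cnt N (a.val + 1) (b.val + 1) + cnt N a.val b.val +
        (if N a b ≠ 0 then 1 else 0) := by
  classical
  simp only [cnt, Finset.card_filter]
  rw [← Finset.sum_add_distrib, ← Finset.sum_add_distrib]
  have hsingle : (if N a b ≠ 0 then 1 else 0) =
      ∑ x : Fin n, if x = a then (if N a b ≠ 0 then (1:ℕ) else 0) else 0 := by
    rw [Finset.sum_ite_eq' Finset.univ a (fun _ => if N a b ≠ 0 then (1:ℕ) else 0)]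
    simp
  rw [hsingle, ← Finset.sum_add_distrib]
  apply Finset.sum_congr rfl
  intro x _
  rcases lt_trichotomy x.val a.val with hlt | heq | hgt
  · have hxa : x ≠ a := by intro h; subst h; omega
    rw [if_neg (by omega : ¬(a.val ≤ x.val ∧ _)), if_neg (by omega : ¬(a.val + 1 ≤ x.val ∧ _)),
      if_neg (by omega : ¬(a.val + 1 ≤ x.val ∧ _)), if_neg (by omega : ¬(a.val ≤ x.val ∧ _)),
      if_neg hxa]
  · have hxa : x = a := Fin.ext heq
    subst hxa
    rw [if_pos rfl]
    have h1 : ¬(x.val + 1 ≤ x.val ∧ ∃ b' : Fin n, b'.val < b.val ∧ N x b' ≠ 0) := by omega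
    have h2 : ¬(x.val + 1 ≤ x.val ∧ ∃ b' : Fin n, b'.val < b.val + 1 ∧ N x b' ≠ 0) := by omega
    rw [if_neg h1, if_neg h2]
    by_cases hb : N x b ≠ 0
    · rw [if_pos hb]
      have hQ : x.val ≤ x.val ∧ ∃ b' : Fin n, b'.val < b.val + 1 ∧ N x b' ≠ 0 :=
        ⟨le_refl _, b, by omega, hb⟩
      have hP : ¬(x.val ≤ x.val ∧ ∃ b' : Fin n, b'.val < b.val ∧ N x b' ≠ 0) := by
        rintro ⟨-, b', hb', hxb'⟩
        have := hrow x b' b hxb' hb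
        omega
      rw [if_pos hQ, if_neg hP]
    · rw [if_neg hb]
      push_neg at hb
      have hQP : (x.val ≤ x.val ∧ ∃ b' : Fin n, b'.val < b.val + 1 ∧ N x b' ≠ 0) ↔
          (x.val ≤ x.val ∧ ∃ b' : Fin n, b'.val < b.val ∧ N x b' ≠ 0) := by
        constructor
        · rintro ⟨-, b', hb', hxb'⟩
          refine ⟨le_refl _, b', ?_, hxb'⟩
          have : b' ≠ b := by intro h; subst h; exact hxb' hb
          have : b'.val ≠ b.val := fun h => this (Fin.ext h)
          omega
        · rintro ⟨-, b', hb', hxb'⟩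
          exact ⟨le_refl _, b', by omega, hxb'⟩
      by_cases hQ : x.val ≤ x.val ∧ ∃ b' : Fin n, b'.val < b.val + 1 ∧ N x b' ≠ 0
      · rw [if_pos hQ, if_pos (hQP.mp hQ)]
      · rw [if_neg hQ, if_neg (fun h => hQ (hQP.mpr h))]
  · have hxa : x ≠ a := by intro h; subst h; omega
    rw [if_neg hxa]
    have e1 : (a.val ≤ x.val ∧ ∃ b' : Fin n, b'.val < b.val + 1 ∧ N x b' ≠ 0) ↔
        (a.val + 1 ≤ x.val ∧ ∃ b' : Fin n, b'.val < b.val + 1 ∧ N x b' ≠ 0) := by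
      constructor
      · rintro ⟨-, h⟩; exact ⟨by omega, h⟩
      · rintro ⟨-, h⟩; exact ⟨by omega, h⟩
    have e2 : (a.val + 1 ≤ x.val ∧ ∃ b' : Fin n, b'.val < b.val ∧ N x b' ≠ 0) ↔
        (a.val ≤ x.val ∧ ∃ b' : Fin n, b'.val < b.val ∧ N x b' ≠ 0) := by
      constructor
      · rintro ⟨-, h⟩; exact ⟨by omega, h⟩
      · rintro ⟨-, h⟩; exact ⟨by omega, h⟩
    rw [if_congr e1 rfl rfl, if_congr e2 rfl rfl]
    omega

end Aux

/-- Two matrices in Borel normal form coincide iff all the invariants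
`dim (N·V_j ∩ V_{≥i})` agree. -/
theorem normal_form_eq_iff_dims {n : ℕ} (N N' : Matrix (Fin n) (Fin n) ℂ)
    (hN : NormalForm N) (hN' : NormalForm N') :
    N = N' ↔ ∀ i j : Fin n,
      Module.finrank ℂ ((Vle n j).map N.mulVecLin ⊓ Vge n i : Submodule ℂ (Fin n → ℂ)) =
      Module.finrank ℂ ((Vle n j).map N'.mulVecLin ⊓ Vge n i : Submodule ℂ (Fin n → ℂ)) := by
  constructor
  · rintro rfl i j; rfl
  · intro h
    -- translate to counting functions
    have hc : ∀ i j : Fin n, cnt N i.val (j.val + 1) = cnt N' i.val (j.val + 1) := by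
      intro i j
      rw [← finrank_eq_cnt N hN i j, ← finrank_eq_cnt N' hN' i j]
      exact h i j
    have hall : ∀ x y : ℕ, y ≤ n → cnt N x y = cnt N' x y := by
      intro x y hy
      rcases Nat.eq_zero_or_pos y with rfl | hy0
      · rw [cnt_zero, cnt_zero]
      · rcases le_or_gt n x with hx | hx
        · rw [cnt_top N hx, cnt_top N' hx]
        · have hj : y - 1 < n := by omega
          have := hc ⟨x, hx⟩ ⟨y - 1, hj⟩
          simp only at this
          have hy1 : y - 1 + 1 = y := by omega
          rwa [hy1] at this
    ext a b
    have e1 := cnt_identity N hN.2.2.1 a b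
    have e2 := cnt_identity N' hN'.2.2.1 a b
    rw [hall a.val (b.val + 1) (by omega), hall (a.val + 1) b.val (by omega),
      hall (a.val + 1) (b.val + 1) (by omega), hall a.val b.val (by omega)] at e1
    have hiff : (if N a b ≠ 0 then (1:ℕ) else 0) = (if N' a b ≠ 0 then (1:ℕ) else 0) := by
      omega
    by_cases h1 : N a b ≠ 0
    · by_cases h2 : N' a b ≠ 0
      · rw [(hN.2.1 a b).resolve_left h1, (hN'.2.1 a b).resolve_left h2]
      · rw [if_pos h1, if_neg h2] at hiff; omega
    · by_cases h2 : N' a b ≠ 0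
      · rw [if_neg h1, if_pos h2] at hiff; omega
      · push_neg at h1 h2; rw [h1, h2]
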